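/- If a graph G (with no isolated vertices) has a drawing in the plane with c crossings, then G has a planar decomposition of width 2 and order at most |V(G)| + c. Concretely, the planar graph obtained from the drawing by replacing each vertex v with the bag {v} and each crossing between edges vw and xy with a degree-4 vertex with bag {v,x} (choosing for each edge one endpoint of each crossed pair consistently along the edge) is a planar decomposition of G of width 2. -/

import Mathlib

open SimpleGraph

universe u

/-- `H` is a minor of `G`: there are pairwise disjoint nonempty connected branch sets
in `G`, one for each vertex of `H`, with an edge of `G` between the branch sets of any
two adjacent vertices of `H`. -/
def IsMinor {α β : Type*} (H : SimpleGraph α) (G : SimpleGraph β) : Prop :=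
  ∃ f : α → Set β,
    (∀ a, (f a).Nonempty) ∧
    (∀ a, (G.induce (f a)).Connected) ∧
    (Pairwise fun a b => Disjoint (f a) (f b)) ∧
    ∀ a b, H.Adj a b → ∃ u ∈ f a, ∃ v ∈ f b, G.Adj u v

/-- A graph is planar iff it has no `K₅` minor and no `K₃,₃` minor (Wagner's theorem). -/
def Planar {β : Type*} (G : SimpleGraph β) : Prop :=
  ¬ IsMinor (⊤ : SimpleGraph (Fin 5)) G ∧
  ¬ IsMinor (completeBipartiteGraph (Fin 3) (Fin 3)) G

/-- `D` (a graph on index type `ι`, with bags `X i ⊆ V(G)`) is a decomposition of `G`: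
every vertex lies in some bag, the bags containing any fixed vertex induce a connected
subgraph of `D`, and for every edge `vw` of `G` the subgraphs `D(v)` and `D(w)` touch
(share a bag, or a bag containing `v` is adjacent in `D` to a bag containing `w`). -/
structure IsDecomposition {V ι : Type*} (G : SimpleGraph V) (D : SimpleGraph ι)
    (X : ι → Finset V) : Prop where
  nonempty : ∀ v : V, ∃ i, v ∈ X i
  connected : ∀ v : V, (D.induce {i : ι | v ∈ X i}).Connected
  touch : ∀ ⦃v w : V⦄, G.Adj v w →
    (∃ i, v ∈ X i ∧ w ∈ X i) ∨ (∃ i j, D.Adj i j ∧ v ∈ X i ∧ w ∈ X j)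

/-- A strong decomposition: additionally, for every edge `vw` of `G` some bag contains
both `v` and `w`. -/
structure IsStrongDecomposition {V ι : Type*} (G : SimpleGraph V) (D : SimpleGraph ι)
    (X : ι → Finset V) : Prop where
  nonempty : ∀ v : V, ∃ i, v ∈ X i
  connected : ∀ v : V, (D.induce {i : ι | v ∈ X i}).Connected
  intersect : ∀ ⦃v w : V⦄, G.Adj v w → ∃ i, v ∈ X i ∧ w ∈ X i

/-- A combinatorial model of a drawing of `G` in the plane with `c` crossings: a planar
planarization graph `P` on the vertices of `G` together with `c` crossing points, in
which each edge `vw` of `G` is routed as a walk from `v` to `w` whose interior passes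
only through crossing points, and each crossing point lies on the routes of exactly two
distinct edges of `G`. -/
def HasDrawingWithCrossings {V : Type u} (G : SimpleGraph V) (c : ℕ) : Prop :=
  ∃ (P : SimpleGraph (V ⊕ Fin c))
    (route : ∀ ⦃v w : V⦄, G.Adj v w → P.Walk (Sum.inl v) (Sum.inl w)),
    Planar P ∧
    (∀ ⦃v w : V⦄ (h : G.Adj v w) (x : V),
      Sum.inl x ∈ (route h).support → x = v ∨ x = w) ∧
    (∀ k : Fin c, ∃ (v w x y : V) (h₁ : G.Adj v w) (h₂ : G.Adj x y),
      s(v, w) ≠ s(x, y) ∧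
      Sum.inr k ∈ (route h₁).support ∧ Sum.inr k ∈ (route h₂).support ∧
      ∀ ⦃a b : V⦄ (h : G.Adj a b),
        Sum.inr k ∈ (route h).support → s(a, b) = s(v, w) ∨ s(a, b) = s(x, y))

/-- Auxiliary: a walk whose support lies in `S` yields reachability in the induced
subgraph on `S`. -/
lemma reachable_induce_of_walk {α : Type*} (P : SimpleGraph α) (S : Set α) {a b : α}
    (p : P.Walk a b) (hs : ∀ x ∈ p.support, x ∈ S) (ha : a ∈ S) (hb : b ∈ S) :
    (P.induce S).Reachable ⟨a, ha⟩ ⟨b, hb⟩ := by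
  induction p with
  | nil => rfl
  | cons hadj q ih =>
      rename_i u x y
      have hx : x ∈ S := hs x (by simp)
      have hrest := ih (fun z hz => hs z (by simp [hz])) hx hb
      exact (SimpleGraph.Reachable.trans
        ⟨SimpleGraph.Walk.cons (by exact hadj) SimpleGraph.Walk.nil⟩ hrest)

/-- Auxiliary: the final endpoint of a path does not occur in a proper `takeUntil`
prefix. -/
lemma end_not_mem_takeUntil {α : Type*} [DecidableEq α] (P : SimpleGraph α)
    {a b u : α} (q : P.Walk a b) (hq : q.IsPath) (h : u ∈ q.support) (hub : u ≠ b) :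
    b ∉ (q.takeUntil u h).support := by
  intro hb
  have spec := q.take_spec h
  have hnd : q.support.Nodup := hq.support_nodup
  rw [← spec, SimpleGraph.Walk.support_append] at hnd
  have hdisj := List.disjoint_of_nodup_append hnd
  have hbd : b ∈ (q.dropUntil u h).support.tail := by
    have hbs : b ∈ (q.dropUntil u h).support := SimpleGraph.Walk.end_mem_support _
    rw [SimpleGraph.Walk.support_eq_cons] at hbs
    rcases List.mem_cons.mp hbs with h1 | h2
    · exact absurd h1.symm hub
    · exact h2
  exact hdisj hb hbd

/-- Auxiliary: the representative of `s(v,w)` is `(v,w)` or `(w,v)`. -/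
lemma sym2_out_cases {α : Type*} (v w : α) :
    (s(v,w)).out = (v,w) ∨ (s(v,w)).out = (w,v) := by
  have h : Quot.mk (Sym2.Rel α) (s(v,w)).out = s(v,w) := Quot.out_eq _
  rcases hab : (s(v,w)).out with ⟨a,b⟩
  rw [hab, Sym2.eq_iff] at h
  rcases h with ⟨rfl,rfl⟩|⟨rfl,rfl⟩ <;> simp

/-- If a graph `G` with no isolated vertices has a drawing in the plane with `c`
crossings, then `G` has a planar decomposition of width 2 and order at most
`|V(G)| + c`. -/
theorem stmt10 {V : Type u} [Fintype V] (G : SimpleGraph V) (c : ℕ)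
    (hiso : ∀ v : V, ∃ w, G.Adj v w)
    (hdraw : HasDrawingWithCrossings G c) :
    ∃ (ι : Type u) (D : SimpleGraph ι) (X : ι → Finset V),
      IsDecomposition G D X ∧ Planar D ∧
      (∀ i, (X i).card ≤ 2) ∧
      Nat.card ι ≤ Fintype.card V + c := by
  classical
  obtain ⟨P, route, hP, hint, hcross⟩ := hdraw
  -- the bag predicate at a crossing `k` :
  -- `u` starts a canonically oriented routed path through `k`
  let Xp : Fin c → V → Prop := fun k u =>
    ∃ w : V, ∃ h : G.Adj u w, (s(u,w)).out = (u,w) ∧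
      Sum.inr k ∈ ((route h).toPath).1.support
  let X : V ⊕ Fin c → Finset V := fun i =>
    Sum.rec (fun v => {v}) (fun k => Set.Finite.toFinset (Set.toFinite {u | Xp k u})) i
  have hmemL : ∀ (u v' : V), u ∈ X (Sum.inl v') ↔ u = v' := fun u v' => by
    show u ∈ ({v'} : Finset V) ↔ _
    simp
  have hmemR : ∀ (u : V) (k : Fin c), u ∈ X (Sum.inr k) ↔ Xp k u := fun u k => by
    show u ∈ Set.Finite.toFinset _ ↔ _
    rw [Set.Finite.mem_toFinset]
    exact Iff.rfl
  refine ⟨V ⊕ Fin c, P, X, ?_, hP, ?_, ?_⟩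
  · -- decomposition
    constructor
    · exact fun v => ⟨Sum.inl v, (hmemL v v).2 rfl⟩
    · -- connectivity of the bags containing `v`
      intro v
      set S : Set (V ⊕ Fin c) := {i | v ∈ X i} with hS
      have hvS : Sum.inl v ∈ S := (hmemL v v).2 rfl
      have key : ∀ i : S, (P.induce S).Reachable i ⟨Sum.inl v, hvS⟩ := by
        rintro ⟨i, hi⟩
        rcases i with x | k
        · have : v = x := (hmemL v x).1 hi
          subst this
          exact SimpleGraph.Reachable.refl _
        · obtain ⟨w, h, hout, hsup⟩ := (hmemR v k).1 hi
          set q : P.Walk (Sum.inl v) (Sum.inl w) :=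
            ((route h).toPath).1 with hqdef
          have hqpath : q.IsPath := (route h).toPath.2
          have hkq : Sum.inr k ∈ q.support := hsup
          have hkw : (Sum.inr k : V ⊕ Fin c) ≠ Sum.inl w := by simp
          have hnw : Sum.inl w ∉ (q.takeUntil (Sum.inr k) hkq).support :=
            end_not_mem_takeUntil P q hqpath hkq hkw
          have hsubS : ∀ z ∈ (q.takeUntil (Sum.inr k) hkq).support, z ∈ S := by
            intro z hz
            have hzq : z ∈ q.support := q.support_takeUntil_subset hkq hz
            have hzr : z ∈ (route h).support :=
              SimpleGraph.Walk.support_toPath_subset (route h) hzq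
            rcases z with x | k'
            · rcases hint h x hzr with rfl | rfl
              · exact hvS
              · exact absurd hz hnw
            · show v ∈ X (Sum.inr k')
              exact (hmemR v k').2 ⟨w, h, hout, hzq⟩
          have := reachable_induce_of_walk P S (q.takeUntil (Sum.inr k) hkq)
            hsubS hvS (hsubS _ (SimpleGraph.Walk.end_mem_support _))
          exact this.symm
      haveI : Nonempty {i : V ⊕ Fin c | v ∈ X i} := ⟨⟨Sum.inl v, hvS⟩⟩
      exact SimpleGraph.Connected.mk (fun i j => (key i).trans (key j).symm)
    · -- touch
      intro v w hvw
      -- general form, given the canonical orientation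
      have key : ∀ (a b : V) (hab : G.Adj a b), (s(a,b)).out = (a,b) →
          ∃ i j, P.Adj i j ∧ a ∈ X i ∧ b ∈ X j := by
        intro a b hab hout
        set q : P.Walk (Sum.inl a) (Sum.inl b) :=
          ((route hab).toPath).1 with hqdef
        have main : ∀ (z t : V ⊕ Fin c) (r : P.Walk z t), t = Sum.inl b →
            (∀ y ∈ r.support, y ∈ q.support) →
            (∃ i j, P.Adj i j ∧ a ∈ X i ∧ b ∈ X j) ∨ z = t := by
          intro z t r
          induction r with
          | nil => exact fun _ _ => Or.inr rfl
          | cons hadj r' ih =>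
              rename_i z z' t'
              intro ht hsub
              have hsub' : ∀ y ∈ r'.support, y ∈ q.support := fun y hy =>
                hsub y (by simp [hy])
              rcases ih ht hsub' with hdone | rfl
              · exact Or.inl hdone
              · -- `z` is adjacent to `inl b`
                subst ht
                have hzq : z ∈ q.support := hsub z (by simp)
                have hzb : z ≠ Sum.inl b := hadj.ne
                rcases z with x | k
                · have hzr : Sum.inl x ∈ (route hab).support :=
                    SimpleGraph.Walk.support_toPath_subset (route hab) hzq
                  rcases hint hab x hzr with rfl | rfl
                  · exact Or.inl ⟨Sum.inl x, Sum.inl b, hadj,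
                      (hmemL x x).2 rfl, (hmemL b b).2 rfl⟩
                  · exact absurd rfl hzb
                · refine Or.inl ⟨Sum.inr k, Sum.inl b, hadj, ?_, (hmemL b b).2 rfl⟩
                  exact (hmemR a k).2 ⟨b, hab, hout, hzq⟩
        rcases main (Sum.inl a) (Sum.inl b) q rfl (fun y hy => hy) with hdone | heq
        · exact hdone
        · exact absurd (Sum.inl.inj heq) hab.ne
      rcases sym2_out_cases v w with hout | hout
      · rcases key v w hvw hout with ⟨i, j, hij, hvi, hwj⟩
        exact Or.inr ⟨i, j, hij, hvi, hwj⟩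
      · have hout' : (s(w,v)).out = (w,v) := by rwa [Sym2.eq_swap] at hout
        rcases key w v hvw.symm hout' with ⟨i, j, hij, hwi, hvj⟩
        exact Or.inr ⟨j, i, hij.symm, hvj, hwi⟩
  · -- width
    intro i
    rcases i with x | k
    · show ({x} : Finset V).card ≤ 2
      simp
    · obtain ⟨v, w, x, y, h₁, h₂, hne, hm1, hm2, hclose⟩ := hcross k
      have hsub : X (Sum.inr k) ⊆ {(s(v,w)).out.1, (s(x,y)).out.1} := by
        intro u hu
        obtain ⟨w', h', hout, hsup⟩ := (hmemR u k).1 hu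
        have hur : Sum.inr k ∈ (route h').support :=
          SimpleGraph.Walk.support_toPath_subset (route h') hsup
        rcases hclose h' hur with he | he
        · have : (u, w') = (s(v,w)).out := by rw [← he, hout]
          have hu1 : u = (s(v,w)).out.1 := by rw [← this]
          simp [hu1]
        · have : (u, w') = (s(x,y)).out := by rw [← he, hout]
          have hu1 : u = (s(x,y)).out.1 := by rw [← this]
          simp [hu1]
      calc (X (Sum.inr k)).card ≤ ({(s(v,w)).out.1, (s(x,y)).out.1} : Finset V).card :=
            Finset.card_le_card hsub
        _ ≤ 2 := Finset.card_insert_le _ _ |>.trans (by simp)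
  · -- order
    simp [Nat.card_sum, Nat.card_eq_fintype_card]
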